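/- arXiv:1603.02668 — 2 statements merged into one kernel-verified Lean document; each statement's English description precedes it below -/
import Mathlib

section
/- For every holomorphic function f on the unit disk with 0 < |f(z)| ≤ 1 for all z (i.e., f maps the disk into the punctured closed unit disk and is nonvanishing), the first Taylor coefficient satisfies |f'(0)| ≤ 2/e. -/
open Complex Metric Set

noncomputable section KrzyzAux

/-- clamp to [0,1] -/
private def clamp01 (t : ℝ) : ℝ := max 0 (min 1 t)

private lemma clamp01_continuous : Continuous clamp01 :=
  continuous_const.max (continuous_const.min continuous_id)

private lemma clamp01_mem (t : ℝ) : clamp01 t ∈ Icc (0:ℝ) 1 :=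
  ⟨le_max_left _ _, max_le (by norm_num) (min_le_left _ _)⟩

private lemma clamp01_eq {t : ℝ} (ht : t ∈ Icc (0:ℝ) 1) : clamp01 t = t := by
  unfold clamp01
  rw [min_eq_right ht.2, max_eq_right ht.1]

/-- Existence of a holomorphic logarithm on the unit ball. -/
private lemma exists_holo_log (f : ℂ → ℂ)
    (hf : DifferentiableOn ℂ f (ball (0:ℂ) 1))
    (hne : ∀ z ∈ ball (0:ℂ) 1, f z ≠ 0) :
    ∃ g : ℂ → ℂ, DifferentiableOn ℂ g (ball (0:ℂ) 1) ∧
      ContinuousOn g (ball (0:ℂ) 1) ∧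
      ∀ z ∈ ball (0:ℂ) 1, Complex.exp (g z) = f z := by
  set B : Set ℂ := ball (0:ℂ) 1 with hB
  have hBo : IsOpen B := isOpen_ball
  set L : ℂ → ℂ := fun z => deriv f z / f z with hL
  have hcd : ContinuousOn (deriv f) B :=
    ((hf.analyticOnNhd hBo).deriv).continuousOn
  have hcL : ContinuousOn L B := hcd.div hf.continuousOn hne
  set g : ℂ → ℂ := fun z =>
    Complex.log (f 0) + ∫ t in (0:ℝ)..1, z * L ((clamp01 t : ℂ) * z) with hg
  have h0B : (0:ℂ) ∈ B := mem_ball_self one_pos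
  -- pointwise exponential identity
  have hexp : ∀ z ∈ B, Complex.exp (g z) = f z := by
    intro z hz
    have hz1 : ‖z‖ < 1 := mem_ball_zero_iff.mp hz
    set c : ℝ → ℂ := fun s => z * L ((s:ℂ) * z) with hc
    set U : Set ℝ := (fun s : ℝ => (s:ℂ) * z) ⁻¹' B with hU
    have hUo : IsOpen U := hBo.preimage (by continuity)
    have hIU : Icc (0:ℝ) 1 ⊆ U := by
      intro t ht
      simp only [hU, mem_preimage, hB, mem_ball_zero_iff]
      calc ‖(t:ℂ) * z‖ = |t| * ‖z‖ := by
            rw [norm_mul, Complex.norm_real, Real.norm_eq_abs]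
        _ ≤ 1 * ‖z‖ := by
            have : |t| ≤ 1 := abs_le.mpr ⟨by linarith [ht.1], ht.2⟩
            exact mul_le_mul_of_nonneg_right this (norm_nonneg _)
        _ < 1 := by simpa using hz1
    have hcU : ContinuousOn c U := by
      apply continuousOn_const.mul
      exact hcL.comp (by fun_prop) (fun s hs => hs)
    have hint : ∀ t ∈ Icc (0:ℝ) 1, IntervalIntegrable c MeasureTheory.volume 0 t := by
      intro t ht
      apply (hcU.mono ?_).intervalIntegrable
      refine subset_trans ?_ hIU
      rw [uIcc_of_le ht.1]
      exact Icc_subset_Icc le_rfl ht.2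
    set G : ℝ → ℂ := fun t => ∫ s in (0:ℝ)..t, c s with hGdef
    have hG : ∀ t ∈ Icc (0:ℝ) 1, HasDerivAt G (c t) t := by
      intro t ht
      exact intervalIntegral.integral_hasDerivAt_right (hint t ht)
        (hcU.stronglyMeasurableAtFilter hUo _ (hIU ht))
        (hcU.continuousAt (hUo.mem_nhds (hIU ht)))
    set u : ℝ → ℂ := fun t => f ((t:ℂ) * z) * Complex.exp (-(G t)) with hu
    have hmem : ∀ t ∈ Icc (0:ℝ) 1, ((t:ℂ) * z) ∈ B := fun t ht => hIU ht
    have hud : ∀ t ∈ Icc (0:ℝ) 1, HasDerivAt u 0 t := by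
      intro t ht
      have hfd : DifferentiableAt ℂ f ((t:ℂ) * z) :=
        hf.differentiableAt (hBo.mem_nhds (hmem t ht))
      have h1 : HasDerivAt (fun w : ℂ => f (w * z)) (deriv f ((t:ℂ) * z) * z) (t:ℂ) := by
        have := hfd.hasDerivAt.comp (t:ℂ) ((hasDerivAt_id ((t:ℂ))).mul_const z)
        simpa [mul_comm, Function.comp_def] using this
      have h2 : HasDerivAt (fun s : ℝ => f ((s:ℂ) * z)) (deriv f ((t:ℂ) * z) * z) t :=
        h1.comp_ofReal
      have h3 : HasDerivAt (fun s : ℝ => Complex.exp (-(G s)))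
          (Complex.exp (-(G t)) * (-(c t))) t := ((hG t ht).neg).cexp
      have h4 := h2.mul h3
      have hfz : f ((t:ℂ) * z) ≠ 0 := hne _ (hmem t ht)
      have : deriv f ((t:ℂ) * z) * z * Complex.exp (-(G t)) +
          f ((t:ℂ) * z) * (Complex.exp (-(G t)) * (-(c t))) = 0 := by
        simp only [hc, hL]
        field_simp
        ring
      rw [this] at h4
      exact h4
    have hkey : u 1 = u 0 := by
      have := constant_of_has_deriv_right_zero
        (f := u) (a := 0) (b := 1)
        (fun t ht => (hud t ht).continuousAt.continuousWithinAt)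
        (fun t ht => ((hud t (Ico_subset_Icc_self ht)).hasDerivWithinAt))
      exact this 1 (right_mem_Icc.mpr zero_le_one)
    have hG0 : G 0 = 0 := intervalIntegral.integral_same
    have hu0 : u 0 = f 0 := by simp [hu, hG0]
    have hu1 : u 1 = f z * Complex.exp (-(G 1)) := by simp [hu]
    have hfz0 : f 0 ≠ 0 := hne 0 h0B
    have hGg : g z = Complex.log (f 0) + G 1 := by
      simp only [hg, hGdef]
      congr 1
      apply intervalIntegral.integral_congr
      intro t ht
      rw [uIcc_of_le zero_le_one] at ht
      simp [hc, clamp01_eq ht]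
    rw [hGg, Complex.exp_add, Complex.exp_log hfz0]
    have : f z * Complex.exp (-(G 1)) = f 0 := by rw [← hu1, ← hu0, hkey]
    have hE : Complex.exp (-(G 1)) ≠ 0 := Complex.exp_ne_zero _
    field_simp at this ⊢
    rw [← this, Complex.exp_neg]
    field_simp
  -- continuity of g on B
  have hgc : ContinuousOn g B := by
    rw [continuousOn_iff_continuous_restrict]
    apply Continuous.add continuous_const
    have : Continuous (Function.uncurry
        (fun (x : B) (t : ℝ) => (x:ℂ) * L ((clamp01 t : ℂ) * (x:ℂ)))) := by
      apply Continuous.mul (by fun_prop)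
      apply hcL.comp_continuous
        ((Complex.continuous_ofReal.comp (clamp01_continuous.comp continuous_snd)).mul
          (continuous_subtype_val.comp continuous_fst))
      rintro ⟨⟨x, hx⟩, t⟩
      simp only [hB, mem_ball_zero_iff] at hx ⊢
      calc ‖(clamp01 t : ℂ) * x‖ = |clamp01 t| * ‖x‖ := by
            rw [norm_mul, Complex.norm_real, Real.norm_eq_abs]
        _ ≤ 1 * ‖x‖ := by
            have h1 := clamp01_mem t
            have : |clamp01 t| ≤ 1 := abs_le.mpr ⟨by linarith [h1.1], h1.2⟩
            exact mul_le_mul_of_nonneg_right this (norm_nonneg _)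
        _ < 1 := by simpa using hx
    exact intervalIntegral.continuous_parametric_intervalIntegral_of_continuous' this 0 1
  -- differentiability of g on B
  have hgd : DifferentiableOn ℂ g B := by
    intro z₀ hz₀
    apply DifferentiableAt.differentiableWithinAt
    have hsd : HasStrictDerivAt Complex.exp (Complex.exp (g z₀)) (g z₀) :=
      Complex.hasStrictDerivAt_exp _
    have hne' : Complex.exp (g z₀) ≠ 0 := Complex.exp_ne_zero _
    set inv : ℂ → ℂ := hsd.localInverse _ _ _ hne' with hinv
    have hlinv : ∀ᶠ w in nhds (g z₀), inv (Complex.exp w) = w :=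
      (hsd.hasStrictFDerivAt_equiv hne').eventually_left_inverse
    have hgz : ContinuousAt g z₀ := hgc.continuousAt (hBo.mem_nhds hz₀)
    have h1 : ∀ᶠ w in nhds z₀, inv (Complex.exp (g w)) = g w := hgz.eventually hlinv
    have h2 : ∀ᶠ w in nhds z₀, Complex.exp (g w) = f w := by
      filter_upwards [hBo.mem_nhds hz₀] with w hw using hexp w hw
    have heq : g =ᶠ[nhds z₀] fun w => inv (f w) := by
      filter_upwards [h1, h2] with w hw1 hw2
      rw [← hw2, hw1]
    have hinvd : DifferentiableAt ℂ inv (f z₀) := by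
      have h := (hsd.to_localInverse (hf' := hne')).hasDerivAt.differentiableAt
      rw [show f z₀ = Complex.exp (g z₀) from (hexp z₀ hz₀).symm]
      exact h
    have : DifferentiableAt ℂ (fun w => inv (f w)) z₀ :=
      hinvd.comp z₀ (hf.differentiableAt (hBo.mem_nhds hz₀))
    exact this.congr_of_eventuallyEq heq
  exact ⟨g, hgd, hgc, hexp⟩

end KrzyzAux

theorem krzyz_first_coeff_bound (f : ℂ → ℂ)
    (hf : DifferentiableOn ℂ f (ball (0:ℂ) 1))
    (hne : ∀ z ∈ ball (0:ℂ) 1, f z ≠ 0)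
    (hb : ∀ z ∈ ball (0:ℂ) 1, ‖f z‖ ≤ 1) :
    ‖deriv f 0‖ ≤ 2 / Real.exp 1 := by
  have hBo : IsOpen (ball (0:ℂ) 1) := isOpen_ball
  have h0B : (0:ℂ) ∈ ball (0:ℂ) 1 := mem_ball_self one_pos
  by_cases hmax : ∃ z₀ ∈ ball (0:ℂ) 1, 1 ≤ ‖f z₀‖
  · obtain ⟨z₀, hz₀, h1⟩ := hmax
    have hm : IsMaxOn (norm ∘ f) (ball (0:ℂ) 1) z₀ := by
      intro z hz
      exact le_trans (hb z hz) h1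
    have heq : EqOn f (Function.const ℂ (f z₀)) (ball (0:ℂ) 1) :=
      Complex.eqOn_of_isPreconnected_of_isMaxOn_norm
        (convex_ball (0:ℂ) 1).isPreconnected hBo hf hz₀ hm
    have hev : f =ᶠ[nhds (0:ℂ)] Function.const ℂ (f z₀) := by
      filter_upwards [hBo.mem_nhds h0B] with w hw using heq hw
    have : deriv f 0 = 0 := by
      rw [hev.deriv_eq]
      exact deriv_const 0 (f z₀)
    rw [this]
    simp
    positivity
  · push_neg at hmax
    obtain ⟨g, hgd, hgc, hexp⟩ := exists_holo_log f hf hne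
    have hre : ∀ z ∈ ball (0:ℂ) 1, (g z).re < 0 := by
      intro z hz
      have h1 : ‖Complex.exp (g z)‖ < 1 := by rw [hexp z hz]; exact hmax z hz
      rw [Complex.norm_exp] at h1
      exact Real.exp_lt_one_iff.mp h1
    set c : ℂ := g 0 with hc
    have hcre : c.re < 0 := hre 0 h0B
    have hden : ∀ z ∈ ball (0:ℂ) 1, g z + (starRingEnd ℂ) c ≠ 0 := by
      intro z hz h
      have : (g z + (starRingEnd ℂ) c).re = (g z).re + c.re := by
        simp [Complex.add_re, Complex.conj_re]
      rw [h] at this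
      simp at this
      have := hre z hz
      linarith
    set φ : ℂ → ℂ := fun z => (g z - c) / (g z + (starRingEnd ℂ) c) with hφ
    have hφd : DifferentiableOn ℂ φ (ball (0:ℂ) 1) :=
      (hgd.sub (differentiableOn_const _)).div
        (hgd.add (differentiableOn_const _)) hden
    have hφ0 : φ 0 = 0 := by simp [hφ, ← hc]
    have hφmaps : MapsTo φ (ball (0:ℂ) 1) (ball (φ 0) 1) := by
      intro z hz
      rw [hφ0, mem_ball_zero_iff]
      have hltsq : Complex.normSq (g z - c) < Complex.normSq (g z + (starRingEnd ℂ) c) := by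
        have h1 := hre z hz
        simp only [Complex.normSq_apply, Complex.sub_re, Complex.sub_im,
          Complex.add_re, Complex.add_im, Complex.conj_re, Complex.conj_im]
        nlinarith [h1, hcre]
      have hlt : ‖g z - c‖ < ‖g z + (starRingEnd ℂ) c‖ := by
        rw [Complex.norm_def, Complex.norm_def]
        exact Real.sqrt_lt_sqrt (Complex.normSq_nonneg _) hltsq
      rw [hφ, norm_div, div_lt_one (norm_pos_iff.mpr (hden z hz))]
      simpa using hlt
    have hschwarz : ‖deriv φ 0‖ ≤ 1 := by
      have := Complex.norm_deriv_le_div_of_mapsTo_ball hφd (hφmaps.mono_right ball_subset_closedBall) one_pos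
      simpa using this
    -- compute deriv φ 0
    have hg0 : HasDerivAt g (deriv g 0) 0 :=
      (hgd.differentiableAt (hBo.mem_nhds h0B)).hasDerivAt
    set D : ℂ := deriv g 0 with hD
    have hcc : c + (starRingEnd ℂ) c ≠ 0 := by
      intro h
      have : (c + (starRingEnd ℂ) c).re = 2 * c.re := by
        simp [Complex.add_re, Complex.conj_re]; ring
      rw [h] at this
      simp at this
      linarith
    have hφderiv : HasDerivAt φ (D / (c + (starRingEnd ℂ) c)) 0 := by
      have h1 : HasDerivAt (fun z => g z - c) D 0 := hg0.sub_const c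
      have h2 : HasDerivAt (fun z => g z + (starRingEnd ℂ) c) D 0 :=
        hg0.add_const _
      have h3 := h1.div h2 (by simpa [← hc] using hden 0 h0B)
      have : (D * (g 0 + (starRingEnd ℂ) c) - (g 0 - c) * D) /
          (g 0 + (starRingEnd ℂ) c) ^ 2 = D / (c + (starRingEnd ℂ) c) := by
        rw [← hc]
        field_simp
        ring
      rwa [this] at h3
    have hDbound : ‖D‖ ≤ -(2 * c.re) := by
      have h1 : deriv φ 0 = D / (c + (starRingEnd ℂ) c) := hφderiv.deriv
      rw [h1, norm_div] at hschwarz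
      have h2 : ‖c + (starRingEnd ℂ) c‖ = -(2 * c.re) := by
        rw [Complex.add_conj]
        rw [Complex.norm_real, Real.norm_eq_abs, abs_of_neg (by linarith)]
      rw [h2] at hschwarz
      have hpos : (0:ℝ) < -(2 * c.re) := by linarith
      exact (div_le_one hpos).mp hschwarz
    -- deriv f 0 = exp c * D
    have hfderiv : deriv f 0 = Complex.exp c * D := by
      have hev : (fun z => Complex.exp (g z)) =ᶠ[nhds (0:ℂ)] f := by
        filter_upwards [hBo.mem_nhds h0B] with w hw using hexp w hw
      have h1 : HasDerivAt (fun z => Complex.exp (g z)) (Complex.exp (g 0) * D) 0 :=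
        hg0.cexp
      rw [← hev.deriv_eq, h1.deriv, hc]
    rw [hfderiv]
    rw [norm_mul, Complex.norm_exp]
    set a : ℝ := c.re with ha
    have key : Real.exp a * ‖D‖ ≤ Real.exp a * (-(2 * a)) := by
      apply mul_le_mul_of_nonneg_left hDbound (Real.exp_pos a).le
    refine le_trans key ?_
    have h3 : -a ≤ Real.exp (-a - 1) := by
      have := Real.add_one_le_exp (-a - 1)
      linarith
    have h4 : Real.exp a * (-(2 * a)) ≤ 2 * Real.exp (-1 : ℝ) := by
      have h5 : Real.exp a * (-a) ≤ Real.exp a * Real.exp (-a - 1) :=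
        mul_le_mul_of_nonneg_left h3 (Real.exp_pos a).le
      rw [← Real.exp_add] at h5
      have : a + (-a - 1) = -1 := by ring
      rw [this] at h5
      nlinarith [Real.exp_pos a]
    rw [Real.exp_neg] at h4
    rw [div_eq_mul_inv]
    linarith
end

section
/- (Golusin's improvement of Schwarz's lemma) If f : 𝔻 → 𝔻 is holomorphic with a zero of order m ≥ 1 at the origin, and c_m = f^{(m)}(0)/m! is the leading Taylor coefficient, then for all t ∈ 𝔻: |f(t)| ≤ |t|^m · (|t| + |c_m|)/(1 + |c_m|·|t|). -/
open Complex Metric Nat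

private lemma normsq_expand1 (a w : ℂ) :
    ‖w - a‖ ^ 2 = ‖w‖ ^ 2 - 2 * ((starRingEnd ℂ) a * w).re + ‖a‖ ^ 2 := by
  rw [Complex.sq_norm, Complex.sq_norm, Complex.sq_norm]
  simp only [normSq_apply, Complex.sub_re, Complex.sub_im, Complex.mul_re, Complex.mul_im,
    Complex.conj_re, Complex.conj_im]
  ring

private lemma normsq_expand2 (a w : ℂ) :
    ‖1 - (starRingEnd ℂ) a * w‖ ^ 2
      = 1 - 2 * ((starRingEnd ℂ) a * w).re + ‖a‖ ^ 2 * ‖w‖ ^ 2 := by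
  rw [Complex.sq_norm, Complex.sq_norm, Complex.sq_norm]
  simp only [normSq_apply, Complex.sub_re, Complex.sub_im, Complex.mul_re, Complex.mul_im,
    Complex.conj_re, Complex.conj_im, Complex.one_re, Complex.one_im]
  ring

private lemma re_le_norm_mul (a w : ℂ) : ((starRingEnd ℂ) a * w).re ≤ ‖a‖ * ‖w‖ := by
  calc ((starRingEnd ℂ) a * w).re ≤ ‖(starRingEnd ℂ) a * w‖ := Complex.re_le_norm _
    _ = ‖a‖ * ‖w‖ := by rw [norm_mul, Complex.norm_conj]

set_option maxHeartbeats 2000000 in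
theorem golusin_schwarz (f : ℂ → ℂ) (m : ℕ) (hm : 1 ≤ m)
    (hf : DifferentiableOn ℂ f (ball (0:ℂ) 1))
    (hb : ∀ z ∈ ball (0:ℂ) 1, ‖f z‖ < 1)
    (hzero : ∀ k < m, iteratedDeriv k f 0 = 0) :
    ∀ t ∈ ball (0:ℂ) 1,
      ‖f t‖ ≤ ‖t‖ ^ m *
        ((‖t‖ + ‖iteratedDeriv m f 0 / (m ! : ℂ)‖) /
          (1 + ‖iteratedDeriv m f 0 / (m ! : ℂ)‖ * ‖t‖)) := by
  have h0mem : (0:ℂ) ∈ ball (0:ℂ) 1 := mem_ball_self one_pos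
  have hA : AnalyticAt ℂ f 0 := hf.analyticAt (isOpen_ball.mem_nhds h0mem)
  obtain ⟨p, hp⟩ := hA
  -- coefficients of p are the Taylor coefficients
  have hcoeff : ∀ k, p.coeff k = iteratedDeriv k f 0 / (k ! : ℂ) := by
    intro k
    obtain ⟨r, hpr⟩ := hp
    have h1 := hpr.factorial_smul (1:ℂ) k
    rw [iteratedDeriv_eq_iteratedFDeriv]
    have h2 : (p k fun _ => (1:ℂ)) = p.coeff k := by
      rw [FormalMultilinearSeries.apply_eq_pow_smul_coeff]; simp
    rw [h2] at h1
    rw [← h1]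
    simp only [nsmul_eq_mul]
    have hk : (k ! : ℂ) ≠ 0 := by exact_mod_cast Nat.factorial_ne_zero k
    field_simp
  set g : ℂ → ℂ := (Function.swap dslope 0)^[m] f with hgdef
  -- values at 0 of the iterated dslopes
  have hval : ∀ k, (Function.swap dslope 0)^[k] f 0 = p.coeff k := by
    intro k
    have h1 := hp.has_fpower_series_iterate_dslope_fslope k
    have h2 := h1.coeff_zero fun _ => (1:ℂ)
    have h3 : (FormalMultilinearSeries.fslope^[k] p).coeff 0 = p.coeff k := by
      rw [FormalMultilinearSeries.coeff_iterate_fslope, zero_add]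
    rw [← h3]
    exact h2.symm
  have hvalz : ∀ k, k < m → (Function.swap dslope 0)^[k] f 0 = 0 := by
    intro k hk
    rw [hval k, hcoeff k, hzero k hk, zero_div]
  -- differentiability of the iterated dslopes
  have hdiff : ∀ k, DifferentiableOn ℂ ((Function.swap dslope 0)^[k] f) (ball (0:ℂ) 1) := by
    intro k
    induction k with
    | zero => exact hf
    | succ k ih =>
      intro z hz
      rcases eq_or_ne z 0 with rfl | hz0
      · exact ((hp.has_fpower_series_iterate_dslope_fslope
          (k+1)).analyticAt.differentiableAt).differentiableWithinAt
      · rw [Function.iterate_succ_apply']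
        exact (differentiableWithinAt_dslope_of_ne hz0).2 (ih z hz)
  have hg_diff : DifferentiableOn ℂ g (ball (0:ℂ) 1) := hdiff m
  -- f 0 = 0
  have hf0 : f 0 = 0 := by
    have := hzero 0 (lt_of_lt_of_le one_pos hm)
    rwa [iteratedDeriv_zero] at this
  -- factorization f t = t ^ m * g t
  have hfac : ∀ k, k ≤ m → ∀ t : ℂ, t ≠ 0 →
      f t = t ^ k * ((Function.swap dslope 0)^[k] f t) := by
    intro k hk
    induction k with
    | zero => intro t _; simp
    | succ k ih =>
      intro t ht
      have hk' : k < m := lt_of_lt_of_le (Nat.lt_succ_self k) hk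
      have h1 := ih (le_of_lt hk') t ht
      rw [Function.iterate_succ_apply']
      have h2 : Function.swap dslope 0 ((Function.swap dslope 0)^[k] f) t
          = dslope ((Function.swap dslope 0)^[k] f) 0 t := rfl
      rw [h2, dslope_of_ne _ ht, slope_def_field, hvalz k hk']
      field_simp [pow_succ]
      rw [h1]; ring
  have hfg : ∀ t ∈ ball (0:ℂ) 1, f t = t ^ m * g t := by
    intro t _
    rcases eq_or_ne t 0 with rfl | ht
    · rw [hf0, zero_pow (Nat.one_le_iff_ne_zero.mp hm), zero_mul]
    · exact hfac m le_rfl t ht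
  -- ‖g‖ ≤ 1 on the ball
  have hg_le : ∀ t ∈ ball (0:ℂ) 1, ‖g t‖ ≤ 1 := by
    intro t ht
    rw [mem_ball_zero_iff] at ht
    have key : ∀ r : ℝ, ‖t‖ < r → r < 1 → ‖g t‖ ≤ 1 / r ^ m := by
      intro r htr hr1
      have hr0 : 0 < r := lt_of_le_of_lt (norm_nonneg t) htr
      have hsub : closure (ball (0:ℂ) r) ⊆ ball (0:ℂ) 1 := by
        rw [closure_ball (0:ℂ) (ne_of_gt hr0)]
        exact closedBall_subset_ball hr1
      refine Complex.norm_le_of_forall_mem_frontier_norm_le isBounded_ball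
        ((hg_diff.mono hsub).diffContOnCl) ?_ (subset_closure (mem_ball_zero_iff.2 htr))
      intro z hz
      rw [frontier_ball (0:ℂ) (ne_of_gt hr0), mem_sphere_zero_iff_norm] at hz
      have hzball : z ∈ ball (0:ℂ) 1 := mem_ball_zero_iff.2 (hz ▸ hr1)
      have hz0 : z ≠ 0 := by
        intro h; rw [h, norm_zero] at hz; exact (ne_of_gt hr0) hz.symm
      have := hfg z hzball
      have hnorm : ‖f z‖ = r ^ m * ‖g z‖ := by
        rw [this, norm_mul, norm_pow, hz]
      have hflt : ‖f z‖ < 1 := hb z hzball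
      rw [hnorm] at hflt
      rw [le_div_iff₀ (by positivity)]
      nlinarith [pow_pos hr0 m]
    have hlim : Filter.Tendsto (fun r : ℝ => 1 / r ^ m) (nhdsWithin 1 (Set.Iio 1)) (nhds 1) := by
      have hc : ContinuousAt (fun r : ℝ => 1 / r ^ m) 1 := by
        exact ContinuousAt.div continuousAt_const ((continuous_pow m).continuousAt)
          (by norm_num)
      have h2 := hc.tendsto
      simp only [one_pow, div_one] at h2
      exact h2.mono_left nhdsWithin_le_nhds
    refine ge_of_tendsto hlim ?_
    have hmem : Set.Ioo ‖t‖ 1 ∈ nhdsWithin (1:ℝ) (Set.Iio 1) :=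
      Ioo_mem_nhdsLT_of_mem ⟨ht, le_refl 1⟩
    filter_upwards [hmem] with r hr
    exact key r hr.1 hr.2
  -- identify the leading coefficient with g 0
  have hkey : iteratedDeriv m f 0 / (m ! : ℂ) = g 0 := by
    rw [hgdef, hval m, hcoeff m]
  intro t ht
  rw [hkey]
  have htn : ‖t‖ < 1 := mem_ball_zero_iff.1 ht
  have hft : ‖f t‖ = ‖t‖ ^ m * ‖g t‖ := by rw [hfg t ht, norm_mul, norm_pow]
  set A : ℝ := ‖g 0‖ with hAdef
  have hA1 : A ≤ 1 := hg_le 0 h0mem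
  have hdenpos : 0 < 1 + A * ‖t‖ := by positivity
  -- main inequality : ‖g t‖ ≤ (‖t‖ + A) / (1 + A * ‖t‖)
  have main : ‖g t‖ ≤ (‖t‖ + A) / (1 + A * ‖t‖) := by
    by_cases hconst : ∃ t₀ ∈ ball (0:ℂ) 1, ‖g t₀‖ = 1
    · -- g is constant of modulus 1
      obtain ⟨t₀, ht₀, hgt₀⟩ := hconst
      have hmax : IsMaxOn (norm ∘ g) (ball (0:ℂ) 1) t₀ := by
        intro z hz
        simp only [Function.comp_apply, hgt₀]
        exact hg_le z hz
      have heq := Complex.eqOn_of_isPreconnected_of_isMaxOn_norm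
        (convex_ball (0:ℂ) 1).isPreconnected isOpen_ball hg_diff ht₀ hmax
      have h1 : ‖g t‖ = 1 := by rw [heq ht]; simpa using hgt₀
      have h2 : A = 1 := by rw [hAdef, heq h0mem]; simpa using hgt₀
      rw [h1, h2]
      rw [le_div_iff₀ (by nlinarith)]
      ring_nf
      nlinarith
    · push_neg at hconst
      have hglt : ∀ z ∈ ball (0:ℂ) 1, ‖g z‖ < 1 := fun z hz =>
        lt_of_le_of_ne (hg_le z hz) (hconst z hz)
      have hAlt : A < 1 := hglt 0 h0mem
      have hA0 : 0 ≤ A := norm_nonneg _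
      set a : ℂ := g 0 with hadef
      -- denominator nonvanishing
      have hD0 : ∀ z ∈ ball (0:ℂ) 1, 1 - (starRingEnd ℂ) a * g z ≠ 0 := by
        intro z hz h
        have h1 : ‖(starRingEnd ℂ) a * g z‖ < 1 := by
          rw [norm_mul, RCLike.norm_conj]
          have hx := hglt z hz
          have hx0 : (0:ℝ) ≤ ‖g z‖ := norm_nonneg _
          nlinarith [mul_pos (show (0:ℝ) < 1 - ‖a‖ ^ 2 by nlinarith)
            (show (0:ℝ) < 1 - ‖g z‖ ^ 2 by nlinarith)]
        have h2 : (starRingEnd ℂ) a * g z = 1 := by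
          have := sub_eq_zero.1 h; linear_combination -this
        rw [h2, norm_one] at h1; exact lt_irrefl 1 h1
      set h : ℂ → ℂ := fun z => (g z - a) / (1 - (starRingEnd ℂ) a * g z) with hhdef
      have hh_diff : DifferentiableOn ℂ h (ball (0:ℂ) 1) := by
        apply DifferentiableOn.div
        · exact hg_diff.sub (differentiableOn_const a)
        · exact (differentiableOn_const 1).sub ((differentiableOn_const _).mul hg_diff)
        · exact hD0
      have hmaps : Set.MapsTo h (ball (0:ℂ) 1) (ball (0:ℂ) 1) := by
        intro z hz
        rw [mem_ball_zero_iff, hhdef]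
        have hD := hD0 z hz
        have hDpos : 0 < ‖1 - (starRingEnd ℂ) a * g z‖ := norm_pos_iff.2 hD
        rw [norm_div, div_lt_one hDpos]
        have hsq : ‖g z - a‖ ^ 2 < ‖1 - (starRingEnd ℂ) a * g z‖ ^ 2 := by
          rw [normsq_expand1, normsq_expand2]
          have ha1 : ‖a‖ < 1 := hAdef ▸ hAlt
          have ha0 : (0:ℝ) ≤ ‖a‖ := norm_nonneg a
          have hx := hglt z hz
          have hx0 : (0:ℝ) ≤ ‖g z‖ := norm_nonneg _
          nlinarith [mul_pos (show (0:ℝ) < 1 - ‖a‖ ^ 2 by nlinarith)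
            (show (0:ℝ) < 1 - ‖g z‖ ^ 2 by nlinarith)]
        exact lt_of_pow_lt_pow_left₀ 2 (norm_nonneg _) hsq
      have hh0 : h 0 = 0 := by
        rw [hhdef]; simp [hadef]
      have hschwarz0 := Complex.norm_le_norm_of_mapsTo_ball (z := t) hh_diff (hmaps.mono_right ball_subset_closedBall) hh0
        (mem_ball_zero_iff.1 ht)
      have hD := hD0 t ht
      have hDpos : 0 < ‖1 - (starRingEnd ℂ) a * g t‖ := norm_pos_iff.2 hD
      have hschwarz : ‖g t - a‖ ≤ ‖t‖ * ‖1 - (starRingEnd ℂ) a * g t‖ := by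
        have h1 : ‖(g t - a) / (1 - (starRingEnd ℂ) a * g t)‖ ≤ ‖t‖ := by
          simpa [hhdef] using hschwarz0
        rw [norm_div] at h1
        exact (div_le_iff₀ hDpos).1 h1
      -- now the quadratic manipulation
      have h1 : ‖g t - a‖ ^ 2 ≤ (‖t‖ * ‖1 - (starRingEnd ℂ) a * g t‖) ^ 2 :=
        pow_le_pow_left₀ (norm_nonneg _) hschwarz 2
      rw [mul_pow, normsq_expand1, normsq_expand2, ← hAdef] at h1
      set x : ℝ := ‖g t‖ with hxdef
      set r : ℝ := ‖t‖ with hrdef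
      set s : ℝ := ((starRingEnd ℂ) a * g t).re with hsdef
      clear_value x r s A a g
      have hx0 : 0 ≤ x := by rw [hxdef]; exact norm_nonneg _
      have hr0 : 0 ≤ r := by rw [hrdef]; exact norm_nonneg _
      have hx1 : x < 1 := by rw [hxdef]; exact hglt t ht
      have hs : s ≤ A * x := by
        rw [hsdef, hAdef, hxdef]; exact re_le_norm_mul a (g t)
      have hQ : x ^ 2 - 2 * s + A ^ 2 ≤ r ^ 2 * (1 - 2 * s + A ^ 2 * x ^ 2) := by
        nlinarith [h1]
      have hQ' : x ^ 2 + A ^ 2 - r ^ 2 - r ^ 2 * A ^ 2 * x ^ 2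
          - 2 * A * x * (1 - r ^ 2) ≤ 0 := by
        have h2 := mul_le_mul_of_nonneg_left hs
          (by nlinarith : (0:ℝ) ≤ 2 * (1 - r ^ 2))
        nlinarith [hQ, h2]
      rw [le_div_iff₀ hdenpos]
      by_contra hgt
      push_neg at hgt
      have h1Ar : 0 < 1 - A * r := by nlinarith
      have hgt' := mul_lt_mul_of_pos_left hgt h1Ar
      have hrA2 : 0 ≤ r * ((1 - A) * (1 + A)) :=
        mul_nonneg hr0 (mul_nonneg (by linarith) (by linarith))
      have hF2 : 0 < (1 - A * r) * x + (r - A) := by nlinarith [hgt', hdenpos, hrA2]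
      have hF1 : 0 < x * (1 + A * r) - (r + A) := by linarith
      have hprod := mul_pos hF1 hF2
      nlinarith [hprod, hQ']
  rw [hft]
  exact mul_le_mul_of_nonneg_left main (by positivity)
end
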